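/- Tower-of-latents extension of TSM: Let (θ_0, z) have C^1 joint density p on ℝ^d × ℝ^m, θ_t = α θ_0 + σ ε with ε ~ N(0, I_d) independent of (θ_0, z). Then E[ (1/α) ∇_{θ_0} log p(θ_0, z) | θ_t ] = E[ (α θ_0 − θ_t)/σ² | θ_t ] almost surely, i.e., the LTSM and DSM regression targets have the same conditional expectation given θ_t. -/

import Mathlib

open MeasureTheory Real

lemma grad_log_aux {d : ℕ} (f : EuclideanSpace ℝ (Fin d) → ℝ) (x : EuclideanSpace ℝ (Fin d))
    (hf : DifferentiableAt ℝ f x) (hpos : 0 < f x) :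
    gradient (fun u => Real.log (f u)) x = (f x)⁻¹ • gradient f x := by
  have hg := hf.hasGradientAt
  have hfd := (hasGradientAt_iff_hasFDerivAt).mp hg
  have hl := hfd.log (ne_of_gt hpos)
  have : HasGradientAt (fun u => Real.log (f u)) ((f x)⁻¹ • gradient f x) x := by
    rw [hasGradientAt_iff_hasFDerivAt, _root_.map_smul]; exact hl
  exact this.gradient

lemma grad_gauss_aux {d : ℕ} (α σ : ℝ) (hσ : 0 < σ) (c : ℝ)
    (θt θ0 : EuclideanSpace ℝ (Fin d)) :
    gradient (fun u => c * Real.exp (-‖θt - α • u‖ ^ 2 / (2 * σ ^ 2))) θ0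
      = ((α / σ ^ 2) * (c * Real.exp (-‖θt - α • θ0‖ ^ 2 / (2 * σ ^ 2)))) • (θt - α • θ0) := by
  have h0 : HasFDerivAt (fun u : EuclideanSpace ℝ (Fin d) => θt - α • u)
      (0 - α • ContinuousLinearMap.id ℝ (EuclideanSpace ℝ (Fin d))) θ0 :=
    (hasFDerivAt_const θt θ0).sub ((hasFDerivAt_id θ0).const_smul α)
  have h1 := h0.norm_sq
  have h2 := (((h1.neg).mul_const ((2 * σ ^ 2)⁻¹)).exp).const_mul c
  have : HasGradientAt (fun u => c * Real.exp (-‖θt - α • u‖ ^ 2 / (2 * σ ^ 2)))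
      (((α / σ ^ 2) * (c * Real.exp (-‖θt - α • θ0‖ ^ 2 / (2 * σ ^ 2)))) • (θt - α • θ0)) θ0 := by
    rw [hasGradientAt_iff_hasFDerivAt]
    have heq : (fun u : EuclideanSpace ℝ (Fin d) =>
        c * Real.exp (-‖θt - α • u‖ ^ 2 / (2 * σ ^ 2)))
        = (fun u => c * Real.exp (-‖θt - α • u‖ ^ 2 * (2 * σ ^ 2)⁻¹)) := by
      ext u; rw [div_eq_mul_inv]
    rw [heq]
    refine HasFDerivAt.congr_fderiv h2 ?_
    ext y
    simp [InnerProductSpace.toDual_apply_apply, real_inner_smul_left, inner_sub_left,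
      ContinuousLinearMap.comp_apply, two_smul, smul_smul]
    field_simp
    ring
  exact this.gradient

/-- LTSM and DSM regression targets have the same conditional expectation
given `θ_t`. Here `(θ_0, z)` has positive C¹ joint density `p` on `ℝ^d × ℝ^m`,
`K θ_t θ_0 = N(θ_t; α θ_0, σ² I)` is the Gaussian forward kernel, `p_t` the marginal of
`θ_t`, and conditional expectations are integrals against the posterior density
`p(θ_0, z) K(θ_t, θ_0)/p_t(θ_t)`. Under integration by parts with vanishing boundary
terms (`hibp`) and a Fubini-type interchange (`hfub`),
`E[(1/α) ∇_{θ_0} log p(θ_0, z) | θ_t] = E[(α θ_0 − θ_t)/σ² | θ_t]`. -/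
theorem stmt13 {d m : ℕ}
    (p : EuclideanSpace ℝ (Fin d) → EuclideanSpace ℝ (Fin m) → ℝ)
    (hp_pos : ∀ θ0 z, 0 < p θ0 z)
    (hp_C1 : ∀ z, ContDiff ℝ 1 (fun θ0 => p θ0 z))
    (hp_density : ∫ θ0, ∫ z, p θ0 z = 1)
    (α σ : ℝ) (hα : 0 < α) (hσ : 0 < σ)
    (K : EuclideanSpace ℝ (Fin d) → EuclideanSpace ℝ (Fin d) → ℝ)
    (hK : K = fun θt θ0 => (2 * π * σ ^ 2) ^ (-(d : ℝ) / 2) *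
        Real.exp (-‖θt - α • θ0‖ ^ 2 / (2 * σ ^ 2)))
    (pt : EuclideanSpace ℝ (Fin d) → ℝ)
    (hpt : pt = fun θt => ∫ θ0, ∫ z, p θ0 z * K θt θ0)
    (θt : EuclideanSpace ℝ (Fin d)) (hpos : 0 < pt θt)
    -- integration by parts in θ0 with vanishing boundary term
    (hibp : ∀ z, (∫ θ0, K θt θ0 • gradient (fun u => p u z) θ0)
        + (∫ θ0, p θ0 z • gradient (fun u => K θt u) θ0) = 0)
    -- Fubini-type interchange for the two posterior-weighted integrands
    (hfub1 : (∫ θ0, ∫ z, (p θ0 z * K θt θ0 / pt θt) •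
          gradient (fun u => Real.log (p u z)) θ0)
        = ∫ z, ∫ θ0, (p θ0 z * K θt θ0 / pt θt) •
            gradient (fun u => Real.log (p u z)) θ0)
    (hfub2 : (∫ θ0, ∫ z, (p θ0 z * K θt θ0 / pt θt) • ((σ ^ 2)⁻¹ • (α • θ0 - θt)))
        = ∫ z, ∫ θ0, (p θ0 z * K θt θ0 / pt θt) • ((σ ^ 2)⁻¹ • (α • θ0 - θt))) :
    (1 / α) • (∫ θ0, ∫ z, (p θ0 z * K θt θ0 / pt θt) •
        gradient (fun u => Real.log (p u z)) θ0)
      = ∫ θ0, ∫ z, (p θ0 z * K θt θ0 / pt θt) •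
          ((σ ^ 2)⁻¹ • (α • θ0 - θt)) := by
  have hσ2 : (σ : ℝ) ^ 2 ≠ 0 := by positivity
  have hptne : pt θt ≠ 0 := ne_of_gt hpos
  rw [hfub1, hfub2, ← integral_smul]
  congr 1
  funext z
  -- fixed z computation
  set A : EuclideanSpace ℝ (Fin d) :=
    ∫ θ0, (p θ0 z * K θt θ0) • (α • θ0 - θt) with hA
  -- gradient of K
  have hgK : ∀ θ0, gradient (fun u => K θt u) θ0
      = ((α / σ ^ 2) * K θt θ0) • (θt - α • θ0) := by
    intro θ0
    rw [hK]
    exact grad_gauss_aux α σ hσ ((2 * π * σ ^ 2) ^ (-(d : ℝ) / 2)) θt θ0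
  -- gradient of log p
  have hgL : ∀ θ0, gradient (fun u => Real.log (p u z)) θ0
      = (p θ0 z)⁻¹ • gradient (fun u => p u z) θ0 := fun θ0 =>
    grad_log_aux (fun u => p u z) θ0 ((hp_C1 z).differentiable one_ne_zero θ0) (hp_pos θ0 z)
  -- IBP consequence
  have h1 : (∫ θ0, K θt θ0 • gradient (fun u => p u z) θ0) = (α / σ ^ 2) • A := by
    have h2 : (∫ θ0, p θ0 z • gradient (fun u => K θt u) θ0)
        = -((α / σ ^ 2) • A) := by
      have hfn : (fun θ0 => p θ0 z • gradient (fun u => K θt u) θ0)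
          = fun θ0 => -((α / σ ^ 2) • ((p θ0 z * K θt θ0) • (α • θ0 - θt))) := by
        funext θ0
        rw [hgK θ0, smul_smul, smul_smul, ← smul_neg, neg_sub]
        congr 1; ring
      rw [hfn, integral_neg, integral_smul]
    have h3 := hibp z
    rw [h2, ← sub_eq_add_neg, sub_eq_zero] at h3
    exact h3
  have hLfun : (fun θ0 => (p θ0 z * K θt θ0 / pt θt) •
        gradient (fun u => Real.log (p u z)) θ0)
      = fun θ0 => (pt θt)⁻¹ • (K θt θ0 • gradient (fun u => p u z) θ0) := by
    funext θ0
    rw [hgL θ0, smul_smul, smul_smul]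
    congr 1
    have hpne : p θ0 z ≠ 0 := (hp_pos θ0 z).ne'
    field_simp
    all_goals ring
  have hRfun : (fun θ0 => (p θ0 z * K θt θ0 / pt θt) • ((σ ^ 2)⁻¹ • (α • θ0 - θt)))
      = fun θ0 => ((pt θt)⁻¹ * (σ ^ 2)⁻¹) • ((p θ0 z * K θt θ0) • (α • θ0 - θt)) := by
    funext θ0
    rw [smul_smul, smul_smul]
    congr 1
    field_simp
    all_goals ring
  calc (1 / α) • ∫ θ0, (p θ0 z * K θt θ0 / pt θt) •
        gradient (fun u => Real.log (p u z)) θ0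
      = (1 / α) • ∫ θ0, (pt θt)⁻¹ • (K θt θ0 • gradient (fun u => p u z) θ0) := by
        rw [hLfun]
    _ = (1 / α) • ((pt θt)⁻¹ • ((α / σ ^ 2) • A)) := by rw [integral_smul, h1]
    _ = ((pt θt)⁻¹ * (σ ^ 2)⁻¹) • A := by
        rw [smul_smul, smul_smul]
        congr 1
        field_simp
        all_goals ring
    _ = ∫ θ0, ((pt θt)⁻¹ * (σ ^ 2)⁻¹) • ((p θ0 z * K θt θ0) • (α • θ0 - θt)) := by
        rw [integral_smul]
    _ = ∫ θ0, (p θ0 z * K θt θ0 / pt θt) • ((σ ^ 2)⁻¹ • (α • θ0 - θt)) := by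
        rw [hRfun]
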